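/- Let f : ℝ² → [0,1] be continuous such that for every v, w ∈ ℝ², the map λ ↦ f(w + λ·v) is monotone (either monotone nondecreasing or monotone nonincreasing, depending on v, w). Then there exists a nonzero vector v ∈ ℝ² such that λ ↦ f(λ·v) is constant on ℝ. -/

import Mathlib

open Set

private noncomputable def vec (θ : ℝ) : ℝ × ℝ := (Real.cos θ, Real.sin θ)

private lemma vec_cont : Continuous vec :=
  Continuous.prodMk Real.continuous_cos Real.continuous_sin

private lemma vec_ne_zero (θ : ℝ) : vec θ ≠ 0 := by
  intro h
  have h1 : Real.cos θ = 0 := congrArg Prod.fst h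
  have h2 : Real.sin θ = 0 := congrArg Prod.snd h
  have := Real.sin_sq_add_cos_sq θ
  rw [h1, h2] at this
  norm_num at this

private lemma sandwich {h : ℝ → ℝ} (hm : Monotone h ∨ Antitone h) {x y a : ℝ}
    (hxy : h x = h y) (hxa : x ≤ a) (hay : a ≤ y) : h a = h x := by
  rcases hm with hm | hm
  · have h1 := hm hxa
    have h2 := hm hay
    linarith
  · have h1 := hm hxa
    have h2 := hm hay
    linarith

/-- Lemma 1: a continuous function on ℝ², valued in [0,1], monotone along every
line, is constant along some ray through the origin. -/
theorem stmt0 (f : ℝ × ℝ → ℝ)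
    (hcont : Continuous f)
    (hrange : ∀ x, f x ∈ Set.Icc (0 : ℝ) 1)
    (hmono : ∀ v w : ℝ × ℝ,
      Monotone (fun t : ℝ => f (w + t • v)) ∨ Antitone (fun t : ℝ => f (w + t • v))) :
    ∃ v : ℝ × ℝ, v ≠ 0 ∧ ∀ a b : ℝ, f (a • v) = f (b • v) := by
  -- monotonicity along rays through the origin
  have hm : ∀ θ : ℝ, Monotone (fun t : ℝ => f (t • vec θ)) ∨
      Antitone (fun t : ℝ => f (t • vec θ)) := by
    intro θ
    have := hmono (vec θ) 0
    simpa using this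
  set K : ℕ → Set ℝ := fun n =>
    {θ : ℝ | θ ∈ Icc 0 Real.pi ∧
      f (((n : ℝ) + 1) • vec θ) = f ((-((n : ℝ) + 1)) • vec θ)} with hK
  have hclosed : ∀ n, IsClosed (K n) := by
    intro n
    apply IsClosed.inter isClosed_Icc
    exact isClosed_eq (hcont.comp (continuous_const.fun_smul vec_cont))
      (hcont.comp (continuous_const.fun_smul vec_cont))
  have hcompact : IsCompact (K 0) :=
    (isCompact_Icc).of_isClosed_subset (hclosed 0) (fun θ hθ => hθ.1)
  have hne : ∀ n, (K n).Nonempty := by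
    intro n
    set c : ℝ := (n : ℝ) + 1 with hc
    set g : ℝ → ℝ := fun θ => f (c • vec θ) - f ((-c) • vec θ) with hg
    have hgc : Continuous g :=
      ((hcont.comp (continuous_const.fun_smul vec_cont)).sub
        (hcont.comp (continuous_const.fun_smul vec_cont)))
    have hvpi : vec Real.pi = -vec 0 := by
      simp [vec, Real.cos_pi, Real.sin_pi]
    have hgpi : g Real.pi = -g 0 := by
      simp only [hg, hvpi]
      have e1 : c • (-vec 0) = (-c) • vec 0 := by
        rw [smul_neg, neg_smul]
      have e2 : (-c) • (-vec 0) = c • vec 0 := by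
        rw [smul_neg, neg_smul, neg_neg]
      rw [e1, e2]
      ring
    have hpi : (0 : ℝ) ≤ Real.pi := Real.pi_pos.le
    rcases le_or_gt (g 0) 0 with h0 | h0
    · have : (0 : ℝ) ∈ Icc (g 0) (g Real.pi) := by
        constructor
        · exact h0
        · rw [hgpi]; linarith
      obtain ⟨θ, hθ, hgθ⟩ := intermediate_value_Icc hpi hgc.continuousOn this
      exact ⟨θ, hθ, sub_eq_zero.mp hgθ⟩
    · have : (0 : ℝ) ∈ Icc (g Real.pi) (g 0) := by
        constructor
        · rw [hgpi]; linarith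
        · exact h0.le
      obtain ⟨θ, hθ, hgθ⟩ := intermediate_value_Icc' hpi hgc.continuousOn this
      exact ⟨θ, hθ, sub_eq_zero.mp hgθ⟩
  have hnested : ∀ n, K (n + 1) ⊆ K n := by
    intro n θ hθ
    obtain ⟨hθI, hθe⟩ := hθ
    refine ⟨hθI, ?_⟩
    have hmθ := hm θ
    push_cast at hθe ⊢
    have h1 : f (((n : ℝ) + 1) • vec θ) = f ((-((n : ℝ) + 1 + 1)) • vec θ) :=
      sandwich hmθ hθe.symm (by linarith) (by linarith)
    have h2 : f ((-((n : ℝ) + 1)) • vec θ) = f ((-((n : ℝ) + 1 + 1)) • vec θ) :=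
      sandwich hmθ hθe.symm (by linarith) (by linarith)
    rw [h1, h2]
  obtain ⟨θ, hθ⟩ := IsCompact.nonempty_iInter_of_sequence_nonempty_isCompact_isClosed
    K hnested hne hcompact hclosed
  refine ⟨vec θ, vec_ne_zero θ, ?_⟩
  intro a b
  have hmθ := hm θ
  set n : ℕ := ⌈max |a| |b|⌉₊ with hn
  have hθn : f (((n : ℝ) + 1) • vec θ) = f ((-((n : ℝ) + 1)) • vec θ) := by
    have := hθ
    rw [Set.mem_iInter] at this
    exact (this n).2
  have hbound : max |a| |b| ≤ (n : ℝ) + 1 :=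
    le_trans (Nat.le_ceil _) (by linarith)
  have ha1 : |a| ≤ (n : ℝ) + 1 := le_trans (le_max_left _ _) hbound
  have hb1 : |b| ≤ (n : ℝ) + 1 := le_trans (le_max_right _ _) hbound
  have haL := abs_le.mp ha1
  have hbL := abs_le.mp hb1
  have h1 : f (a • vec θ) = f ((-((n : ℝ) + 1)) • vec θ) :=
    sandwich hmθ hθn.symm haL.1 haL.2
  have h2 : f (b • vec θ) = f ((-((n : ℝ) + 1)) • vec θ) :=
    sandwich hmθ hθn.symm hbL.1 hbL.2
  rw [h1, h2]
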